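/- Let L₁ be a linear order with a least element and no greatest element, and L₂ a linear order with a greatest element and no least element. Then {L₁, L₂} ≤_c {E₁, E₂}, where E_k is the equivalence structure with infinitely many infinite classes and exactly one class of size k. -/

import Mathlib

/-- A finite piece of an atomic diagram of a structure in a language with one
binary relation, with domain a finite set of naturals. -/
structure FinD where
  dom : Finset ℕ
  rel : ℕ → ℕ → Prop

/-- `β` extends `α` as a finite atomic diagram. -/
def FinD.Ext (α β : FinD) : Prop :=
  α.dom ⊆ β.dom ∧ ∀ x ∈ α.dom, ∀ y ∈ α.dom, (α.rel x y ↔ β.rel x y)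

/-- An enumeration operator: it monotonically enumerates membership facts,
positive atomic facts `R(x, y)` and negative atomic facts `¬ R(x, y)`. -/
structure EOp where
  mem : FinD → Set ℕ
  pos : FinD → Set (ℕ × ℕ)
  neg : FinD → Set (ℕ × ℕ)
  mono_mem : ∀ {α β : FinD}, α.Ext β → mem α ⊆ mem β
  mono_pos : ∀ {α β : FinD}, α.Ext β → pos α ⊆ pos β
  mono_neg : ∀ {α β : FinD}, α.Ext β → neg α ⊆ neg β

/-- A (possibly infinite) diagram with domain a set of naturals. -/
structure Diag where
  dom : Set ℕ
  rel : ℕ → ℕ → Prop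

/-- `α` is a finite subdiagram of `L`. -/
def FinD.SubDiag (α : FinD) (L : Diag) : Prop :=
  ↑α.dom ⊆ L.dom ∧ ∀ x ∈ α.dom, ∀ y ∈ α.dom, (α.rel x y ↔ L.rel x y)

/-- Membership facts enumerated by `Γ` on the diagram `L`. -/
def EOp.memD (Γ : EOp) (L : Diag) : Set ℕ :=
  {x | ∃ α : FinD, α.SubDiag L ∧ x ∈ Γ.mem α}

/-- Positive facts enumerated by `Γ` on the diagram `L`. -/
def EOp.posD (Γ : EOp) (L : Diag) : Set (ℕ × ℕ) :=
  {p | ∃ α : FinD, α.SubDiag L ∧ p ∈ Γ.pos α}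

/-- Negative facts enumerated by `Γ` on the diagram `L`. -/
def EOp.negD (Γ : EOp) (L : Diag) : Set (ℕ × ℕ) :=
  {p | ∃ α : FinD, α.SubDiag L ∧ p ∈ Γ.neg α}

/-- `L` is (the atomic diagram of) a copy of the structure `(τ, r)`. -/
def IsCopyR {τ : Type} (r : τ → τ → Prop) (L : Diag) : Prop :=
  ∃ f : τ → ℕ, Function.Injective f ∧ Set.range f = L.dom ∧
    ∀ i j : τ, (L.rel (f i) (f j) ↔ r i j)

/-- The output of `Γ` on `L` is (the atomic diagram of) a copy of `(σ, s)`. -/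
def EOp.OutCopyR {σ : Type} (Γ : EOp) (s : σ → σ → Prop) (L : Diag) : Prop :=
  ∃ g : σ → ℕ, Function.Injective g ∧ Γ.memD L = Set.range g ∧
    (∀ a b : σ, ((g a, g b) ∈ Γ.posD L ↔ s a b)) ∧
    (∀ a b : σ, ((g a, g b) ∈ Γ.negD L ↔ ¬ s a b))

/-- `{A₁, A₂} ≤_c {B₁, B₂}` : there is an enumeration operator mapping every
copy of `A₁` to a copy of `B₁` and every copy of `A₂` to a copy of `B₂`. -/
def PairLE {τ₁ τ₂ σ₁ σ₂ : Type} (r₁ : τ₁ → τ₁ → Prop) (r₂ : τ₂ → τ₂ → Prop)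
    (s₁ : σ₁ → σ₁ → Prop) (s₂ : σ₂ → σ₂ → Prop) : Prop :=
  ∃ Γ : EOp, (∀ L : Diag, IsCopyR r₁ L → Γ.OutCopyR s₁ L) ∧
    (∀ L : Diag, IsCopyR r₂ L → Γ.OutCopyR s₂ L)

/-- The equivalence structure `E` with infinitely many infinite classes and no
finite classes: classes are the columns of `ℕ × ℕ`. -/
def relE : ℕ × ℕ → ℕ × ℕ → Prop := fun p q => p.1 = q.1

/-- The equivalence structure `E_k` with infinitely many infinite classes and
exactly one class of size `k`. -/
def relEk (k : ℕ) : (ℕ × ℕ) ⊕ Fin k → (ℕ × ℕ) ⊕ Fin k → Prop := fun x y =>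
  match x, y with
  | Sum.inl p, Sum.inl q => p.1 = q.1
  | Sum.inr _, Sum.inr _ => True
  | _, _ => False

/-- The equivalence structure `Ê_k` with infinitely many infinite classes and
infinitely many classes of size exactly `k`. -/
def relEhat (k : ℕ) : (ℕ × ℕ) ⊕ (ℕ × Fin k) → (ℕ × ℕ) ⊕ (ℕ × Fin k) → Prop := fun x y =>
  match x, y with
  | Sum.inl p, Sum.inl q => p.1 = q.1
  | Sum.inr p, Sum.inr q => p.1 = q.1
  | _, _ => False

namespace OTE

def ptA (x : ℕ) : ℕ := Nat.pair x (Nat.pair 0 0)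
def ptC (x : ℕ) : ℕ := Nat.pair x (Nat.pair 1 0)
def ptB (x y z : ℕ) : ℕ := Nat.pair x (Nat.pair 2 (Nat.pair y z))
def lab (n : ℕ) : ℕ := n.unpair.1

@[simp] lemma lab_ptA (x : ℕ) : lab (ptA x) = x := by simp [lab, ptA]
@[simp] lemma lab_ptC (x : ℕ) : lab (ptC x) = x := by simp [lab, ptC]
@[simp] lemma lab_ptB (x y z : ℕ) : lab (ptB x y z) = x := by simp [lab, ptB]

lemma ptA_inj : Function.Injective ptA := by
  intro a b h; simpa [ptA, Nat.pair_eq_pair] using h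

lemma ptA_ne_ptC (x y : ℕ) : ptA x ≠ ptC y := by
  simp [ptA, ptC, Nat.pair_eq_pair]

lemma ptA_ne_ptB (x y z w : ℕ) : ptA x ≠ ptB y z w := by
  simp [ptA, ptB, Nat.pair_eq_pair]

lemma ptC_ne_ptB (x y z w : ℕ) : ptC x ≠ ptB y z w := by
  simp [ptC, ptB, Nat.pair_eq_pair]

lemma ptB_inj3 {x y z z' : ℕ} (h : ptB x y z = ptB x y z') : z = z' := by
  simpa [ptB, Nat.pair_eq_pair] using h

lemma ptB_inj2 {x y y' z : ℕ} (h : ptB x y z = ptB x y' z) : y = y' := by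
  simpa [ptB, Nat.pair_eq_pair] using h

/-- The described set of points on any diagram. -/
def memL (L : Diag) : Set ℕ :=
  {n | (∃ x ∈ L.dom, n = ptA x) ∨
       (∃ x ∈ L.dom, ∃ y ∈ L.dom, L.rel y x ∧ n = ptC x) ∨
       (∃ x ∈ L.dom, ∃ y ∈ L.dom, ∃ z ∈ L.dom, L.rel y x ∧ L.rel x z ∧ n = ptB x y z)}

def FinD.toDiag (α : FinD) : Diag := ⟨↑α.dom, α.rel⟩

lemma memL_mono {L M : Diag} (hdom : L.dom ⊆ M.dom)
    (hrel : ∀ x ∈ L.dom, ∀ y ∈ L.dom, (L.rel x y ↔ M.rel x y)) :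
    memL L ⊆ memL M := by
  rintro n (⟨x, hx, rfl⟩ | ⟨x, hx, y, hy, hr, rfl⟩ | ⟨x, hx, y, hy, z, hz, hr1, hr2, rfl⟩)
  · exact Or.inl ⟨x, hdom hx, rfl⟩
  · exact Or.inr (Or.inl ⟨x, hdom hx, y, hdom hy, (hrel y hy x hx).mp hr, rfl⟩)
  · exact Or.inr (Or.inr ⟨x, hdom hx, y, hdom hy, z, hdom hz,
      (hrel y hy x hx).mp hr1, (hrel x hx z hz).mp hr2, rfl⟩)

def Γop : EOp where
  mem α := memL (FinD.toDiag α)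
  pos α := {p | p.1 ∈ memL (FinD.toDiag α) ∧ p.2 ∈ memL (FinD.toDiag α) ∧ lab p.1 = lab p.2}
  neg α := {p | p.1 ∈ memL (FinD.toDiag α) ∧ p.2 ∈ memL (FinD.toDiag α) ∧ lab p.1 ≠ lab p.2}
  mono_mem := by
    intro α β h
    exact memL_mono (by exact_mod_cast h.1) (by simpa [FinD.toDiag] using h.2)
  mono_pos := by
    intro α β h p hp
    have hm : memL (FinD.toDiag α) ⊆ memL (FinD.toDiag β) :=
      memL_mono (by exact_mod_cast h.1) (by simpa [FinD.toDiag] using h.2)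
    exact ⟨hm hp.1, hm hp.2.1, hp.2.2⟩
  mono_neg := by
    intro α β h p hp
    have hm : memL (FinD.toDiag α) ⊆ memL (FinD.toDiag β) :=
      memL_mono (by exact_mod_cast h.1) (by simpa [FinD.toDiag] using h.2)
    exact ⟨hm hp.1, hm hp.2.1, hp.2.2⟩

lemma sub_memL {α : FinD} {L : Diag} (h : α.SubDiag L) :
    memL (FinD.toDiag α) ⊆ memL L :=
  memL_mono (by exact_mod_cast h.1) (by simpa [FinD.toDiag] using h.2)

lemma restrict_subdiag (L : Diag) (s : Finset ℕ) (hs : ↑s ⊆ L.dom) :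
    (FinD.mk s L.rel).SubDiag L :=
  ⟨hs, fun _ _ _ _ => Iff.rfl⟩

/-- Every point of `memL L` is already produced on a finite subdiagram with the
same relation, with domain any finite superset of its witnesses. -/
lemma exists_fin {L : Diag} {n : ℕ} (hn : n ∈ memL L) :
    ∃ s : Finset ℕ, ↑s ⊆ L.dom ∧
      ∀ t : Finset ℕ, s ⊆ t → ↑t ⊆ L.dom → n ∈ memL (FinD.toDiag (FinD.mk t L.rel)) := by
  rcases hn with ⟨x, hx, rfl⟩ | ⟨x, hx, y, hy, hr, rfl⟩ |
    ⟨x, hx, y, hy, z, hz, hr1, hr2, rfl⟩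
  · refine ⟨{x}, by simpa using hx, fun t hst _ => ?_⟩
    exact Or.inl ⟨x, by simpa [FinD.toDiag] using hst (by simp), rfl⟩
  · refine ⟨{x, y}, ?_, fun t hst _ => ?_⟩
    · intro a ha; simp at ha; rcases ha with rfl | rfl <;> assumption
    · exact Or.inr (Or.inl ⟨x, by exact_mod_cast hst (by simp), y,
        by exact_mod_cast hst (by simp), hr, rfl⟩)
  · refine ⟨{x, y, z}, ?_, fun t hst _ => ?_⟩
    · intro a ha; simp at ha; rcases ha with rfl | rfl | rfl <;> assumption
    · exact Or.inr (Or.inr ⟨x, by exact_mod_cast hst (by simp), y,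
        by exact_mod_cast hst (by simp), z, by exact_mod_cast hst (by simp), hr1, hr2, rfl⟩)

lemma memD_eq (L : Diag) : Γop.memD L = memL L := by
  ext n
  constructor
  · rintro ⟨α, hsub, hmem⟩; exact sub_memL hsub hmem
  · intro hn
    obtain ⟨s, hs, h⟩ := exists_fin hn
    exact ⟨⟨s, L.rel⟩, restrict_subdiag L s hs, h s (subset_refl _) hs⟩

lemma posD_eq (L : Diag) :
    Γop.posD L = {p | p.1 ∈ memL L ∧ p.2 ∈ memL L ∧ lab p.1 = lab p.2} := by
  ext p
  constructor
  · rintro ⟨α, hsub, h1, h2, h3⟩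
    exact ⟨sub_memL hsub h1, sub_memL hsub h2, h3⟩
  · rintro ⟨h1, h2, h3⟩
    obtain ⟨s, hs, hf⟩ := exists_fin h1
    obtain ⟨t, ht, hg⟩ := exists_fin h2
    have hst : ↑(s ∪ t) ⊆ L.dom := by
      push_cast; exact Set.union_subset hs ht
    exact ⟨⟨s ∪ t, L.rel⟩, restrict_subdiag L _ hst,
      hf _ Finset.subset_union_left hst, hg _ Finset.subset_union_right hst, h3⟩

lemma negD_eq (L : Diag) :
    Γop.negD L = {p | p.1 ∈ memL L ∧ p.2 ∈ memL L ∧ lab p.1 ≠ lab p.2} := by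
  ext p
  constructor
  · rintro ⟨α, hsub, h1, h2, h3⟩
    exact ⟨sub_memL hsub h1, sub_memL hsub h2, h3⟩
  · rintro ⟨h1, h2, h3⟩
    obtain ⟨s, hs, hf⟩ := exists_fin h1
    obtain ⟨t, ht, hg⟩ := exists_fin h2
    have hst : ↑(s ∪ t) ⊆ L.dom := by
      push_cast; exact Set.union_subset hs ht
    exact ⟨⟨s ∪ t, L.rel⟩, restrict_subdiag L _ hst,
      hf _ Finset.subset_union_left hst, hg _ Finset.subset_union_right hst, h3⟩

/-- The class of points with label `x`. -/
def Cls (L : Diag) (x : ℕ) : Set ℕ := {n | n ∈ memL L ∧ lab n = x}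

lemma lab_mem {L : Diag} {n : ℕ} (hn : n ∈ memL L) : lab n ∈ L.dom := by
  rcases hn with ⟨x, hx, rfl⟩ | ⟨x, hx, _, _, _, rfl⟩ | ⟨x, hx, _, _, _, _, _, _, rfl⟩ <;>
    simpa using hx

/-- The abstract output-copy builder. -/
lemma outcopy (L : Diag) (k : ℕ) (T : Fin k → ℕ) (hT : Function.Injective T)
    (I : Type) [Countable I] [Infinite I]
    (lb : I → ℕ) (hlb : Function.Injective lb) (x₀ : ℕ)
    (hx₀ : ∀ i, lb i ≠ x₀)
    (hTcls : Set.range T = Cls L x₀)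
    (hCinf : ∀ i, (Cls L (lb i)).Infinite)
    (hcover : ∀ n ∈ memL L, lab n = x₀ ∨ ∃ i, lab n = lb i) :
    Γop.OutCopyR (relEk k) L := by
  classical
  obtain ⟨e⟩ : Nonempty (ℕ ≃ I) := nonempty_equiv_of_countable
  have hEquiv : ∀ i : I, Nonempty (ℕ ≃ ↥(Cls L (lb i))) := by
    intro i
    haveI := (hCinf i).to_subtype
    exact nonempty_equiv_of_countable
  have h : ∀ i : I, ℕ ≃ ↥(Cls L (lb i)) := fun i => Classical.choice (hEquiv i)
  set g : (ℕ × ℕ) ⊕ Fin k → ℕ := fun a =>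
    match a with
    | Sum.inl p => ((h (e p.1)) p.2 : ℕ)
    | Sum.inr j => T j with hg
  have hTmem : ∀ j, T j ∈ Cls L x₀ := by
    intro j; rw [← hTcls]; exact ⟨j, rfl⟩
  have hgmem : ∀ a, g a ∈ memL L := by
    rintro (⟨n, j⟩ | j)
    · exact ((h (e n)) j).2.1
    · exact (hTmem j).1
  have hlabl : ∀ n j, lab (g (Sum.inl (n, j))) = lb (e n) := fun n j => ((h (e n)) j).2.2
  have hlabr : ∀ j, lab (g (Sum.inr j)) = x₀ := fun j => (hTmem j).2
  refine ⟨g, ?_, ?_, ?_, ?_⟩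
  · -- injective
    rintro (⟨n, j⟩ | j) (⟨n', j'⟩ | j') hab
    · have hn : n = n' := e.injective (hlb (by
        rw [← hlabl n j, ← hlabl n' j', hab]))
      subst hn
      have : ((h (e n)) j) = ((h (e n)) j') := Subtype.ext hab
      rw [(h (e n)).injective this]
    · exact absurd (by rw [← hlabl n j, hab, hlabr j']) (hx₀ (e n))
    · exact absurd (by rw [← hlabr j, hab, hlabl n' j']) (Ne.symm (hx₀ (e n')))
    · rw [hT hab]
  · -- memD = range g
    rw [memD_eq]
    ext n
    constructor
    · intro hn
      rcases hcover n hn with hl | ⟨i, hl⟩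
      · have : n ∈ Set.range T := by rw [hTcls]; exact ⟨hn, hl⟩
        obtain ⟨j, rfl⟩ := this
        exact ⟨Sum.inr j, rfl⟩
      · have hmem : n ∈ Cls L (lb (e (e.symm i))) := by
          rw [e.apply_symm_apply]; exact ⟨hn, hl⟩
        refine ⟨Sum.inl (e.symm i, (h (e (e.symm i))).symm ⟨n, hmem⟩), ?_⟩
        exact congrArg Subtype.val ((h (e (e.symm i))).apply_symm_apply ⟨n, hmem⟩)
    · rintro ⟨a, rfl⟩; exact hgmem a
  · -- pos
    intro a b
    rw [posD_eq]
    have hma := hgmem a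
    have hmb := hgmem b
    rcases a with ⟨n, j⟩ | j <;> rcases b with ⟨n', j'⟩ | j'
    · simp only [Set.mem_setOf_eq, hma, hmb, true_and, hlabl]
      constructor
      · intro hl; exact e.injective (hlb hl)
      · intro hl; show lb (e n) = lb (e n')
        rw [show n = n' from hl]
    · simp only [Set.mem_setOf_eq, hma, hmb, true_and, hlabl, hlabr]
      exact ⟨fun hl => absurd hl (hx₀ (e n)), fun hl => absurd hl (fun hl => hl.elim)⟩
    · simp only [Set.mem_setOf_eq, hma, hmb, true_and, hlabl, hlabr]
      exact ⟨fun hl => absurd hl.symm (hx₀ (e n')), fun hl => hl.elim⟩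
    · simp only [Set.mem_setOf_eq, hma, hmb, true_and, hlabr]
      exact ⟨fun _ => trivial, fun _ => trivial⟩
  · -- neg
    intro a b
    rw [negD_eq]
    have hma := hgmem a
    have hmb := hgmem b
    rcases a with ⟨n, j⟩ | j <;> rcases b with ⟨n', j'⟩ | j'
    · simp only [Set.mem_setOf_eq, hma, hmb, true_and, hlabl]
      constructor
      · intro hl hn; exact hl (by rw [show n = n' from hn])
      · intro hl hn; exact hl (e.injective (hlb hn))
    · simp only [Set.mem_setOf_eq, hma, hmb, true_and, hlabl, hlabr]
      exact ⟨fun _ h => h.elim, fun _ => hx₀ (e n)⟩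
    · simp only [Set.mem_setOf_eq, hma, hmb, true_and, hlabl, hlabr]
      exact ⟨fun _ h => h.elim, fun _ hl => (hx₀ (e n')) hl.symm⟩
    · simp only [Set.mem_setOf_eq, hma, hmb, true_and, hlabr]
      exact ⟨fun hl _ => hl rfl, fun hl => absurd trivial hl⟩


lemma case1 {Lo : Type} [LinearOrder Lo] [Countable Lo]
    (hleast : ∃ a : Lo, ∀ b, a ≤ b) (hnogreat : ¬ ∃ a : Lo, ∀ b, b ≤ a)
    (L : Diag) (hc : IsCopyR ((· < ·) : Lo → Lo → Prop) L) :
    Γop.OutCopyR (relEk 1) L := by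
  classical
  obtain ⟨f, hfinj, hfrange, hfrel⟩ := hc
  obtain ⟨m, hm⟩ := hleast
  push_neg at hnogreat
  have hgt : ∀ a : Lo, ∃ b, a < b := hnogreat
  haveI : Nonempty Lo := ⟨m⟩
  haveI : NoMaxOrder Lo := ⟨hgt⟩
  haveI : Infinite {i : Lo // i ≠ m} := by
    have h1 : ({m} : Set Lo)ᶜ.Infinite := (Set.finite_singleton m).infinite_compl
    haveI := h1.to_subtype
    exact Infinite.of_injective
      (fun w : ↥(({m} : Set Lo)ᶜ) => (⟨w.1, fun h => w.2 (Set.mem_singleton_iff.mpr h)⟩ : {i : Lo // i ≠ m}))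
      (fun a b hab => Subtype.ext (congrArg Subtype.val hab))
  have hfd : ∀ i : Lo, f i ∈ L.dom := fun i => hfrange ▸ ⟨i, rfl⟩
  set T : Fin 1 → ℕ := fun j => Nat.pair (f m) (Nat.pair j.val 0) with hTdef
  have hT : Function.Injective T := fun a b _ => Subsingleton.elim a b
  have hclsm : Cls L (f m) = {ptA (f m)} := by
    ext n
    constructor
    · rintro ⟨hn, hlabn⟩
      rcases hn with ⟨x, hx, rfl⟩ | ⟨x, hx, y, hy, hr, rfl⟩ |
        ⟨x, hx, y, hy, z, hz, hr1, hr2, rfl⟩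
      · rw [lab_ptA] at hlabn; subst hlabn; rfl
      · exfalso
        rw [lab_ptC] at hlabn; subst hlabn
        rw [← hfrange] at hy; obtain ⟨y', rfl⟩ := hy
        exact absurd ((hfrel y' m).mp hr) (not_lt.mpr (hm y'))
      · exfalso
        rw [lab_ptB] at hlabn; subst hlabn
        rw [← hfrange] at hy; obtain ⟨y', rfl⟩ := hy
        exact absurd ((hfrel y' m).mp hr1) (not_lt.mpr (hm y'))
    · rintro rfl
      exact ⟨Or.inl ⟨f m, hfd m, rfl⟩, lab_ptA _⟩
  apply outcopy L 1 T hT {i : Lo // i ≠ m} (fun i => f i.val)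
    (fun a b hab => Subtype.ext (hfinj hab)) (f m)
  · exact fun i hi => i.2 (hfinj hi)
  · rw [hclsm]
    ext n
    constructor
    · rintro ⟨j, rfl⟩
      have hj : j = 0 := Subsingleton.elim _ _
      rw [hj]; rfl
    · rintro rfl; exact ⟨0, rfl⟩
  · intro i
    have hmi : m < i.val := lt_of_le_of_ne (hm i.val) (Ne.symm i.2)
    exact Set.infinite_of_injective_forall_mem
      (f := fun z : ↥(Set.Ioi i.val) => ptB (f i.val) (f m) (f z.val))
      (fun a b hab => Subtype.ext (hfinj (ptB_inj3 hab)))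
      (fun z => ⟨Or.inr (Or.inr ⟨f i.val, hfd _, f m, hfd _, f z.val, hfd _,
        (hfrel m i.val).mpr hmi, (hfrel i.val z.val).mpr z.2, rfl⟩), lab_ptB _ _ _⟩)
  · intro n hn
    have hlm := lab_mem hn
    rw [← hfrange] at hlm
    obtain ⟨i, hi⟩ := hlm
    by_cases h : i = m
    · left; rw [← hi, h]
    · right; exact ⟨⟨i, h⟩, hi.symm⟩

lemma case2 {Lo : Type} [LinearOrder Lo] [Countable Lo]
    (hgreat : ∃ a : Lo, ∀ b, b ≤ a) (hnoleast : ¬ ∃ a : Lo, ∀ b, a ≤ b)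
    (L : Diag) (hc : IsCopyR ((· < ·) : Lo → Lo → Prop) L) :
    Γop.OutCopyR (relEk 2) L := by
  classical
  obtain ⟨f, hfinj, hfrange, hfrel⟩ := hc
  obtain ⟨m, hm⟩ := hgreat
  push_neg at hnoleast
  have hlt : ∀ a : Lo, ∃ b, b < a := hnoleast
  haveI : Nonempty Lo := ⟨m⟩
  haveI : NoMinOrder Lo := ⟨hlt⟩
  haveI : Infinite {i : Lo // i ≠ m} := by
    have h1 : ({m} : Set Lo)ᶜ.Infinite := (Set.finite_singleton m).infinite_compl
    haveI := h1.to_subtype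
    exact Infinite.of_injective
      (fun w : ↥(({m} : Set Lo)ᶜ) => (⟨w.1, fun h => w.2 (Set.mem_singleton_iff.mpr h)⟩ : {i : Lo // i ≠ m}))
      (fun a b hab => Subtype.ext (congrArg Subtype.val hab))
  have hfd : ∀ i : Lo, f i ∈ L.dom := fun i => hfrange ▸ ⟨i, rfl⟩
  set T : Fin 2 → ℕ := fun j => Nat.pair (f m) (Nat.pair j.val 0) with hTdef
  have hT : Function.Injective T := fun a b hab =>
    Fin.ext (by simpa [hTdef, Nat.pair_eq_pair] using hab)
  obtain ⟨y₀, hy₀⟩ := hlt m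
  have hclsm : Cls L (f m) = {ptA (f m), ptC (f m)} := by
    ext n
    constructor
    · rintro ⟨hn, hlabn⟩
      rcases hn with ⟨x, hx, rfl⟩ | ⟨x, hx, y, hy, hr, rfl⟩ |
        ⟨x, hx, y, hy, z, hz, hr1, hr2, rfl⟩
      · rw [lab_ptA] at hlabn; subst hlabn; exact Or.inl rfl
      · rw [lab_ptC] at hlabn; subst hlabn; exact Or.inr rfl
      · exfalso
        rw [lab_ptB] at hlabn; subst hlabn
        rw [← hfrange] at hz; obtain ⟨z', rfl⟩ := hz
        exact absurd ((hfrel m z').mp hr2) (not_lt.mpr (hm z'))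
    · rintro (rfl | rfl)
      · exact ⟨Or.inl ⟨f m, hfd m, rfl⟩, lab_ptA _⟩
      · exact ⟨Or.inr (Or.inl ⟨f m, hfd m, f y₀, hfd y₀,
          (hfrel y₀ m).mpr hy₀, rfl⟩), lab_ptC _⟩
  apply outcopy L 2 T hT {i : Lo // i ≠ m} (fun i => f i.val)
    (fun a b hab => Subtype.ext (hfinj hab)) (f m)
  · exact fun i hi => i.2 (hfinj hi)
  · rw [hclsm]
    ext n
    constructor
    · rintro ⟨j, rfl⟩
      fin_cases j
      · exact Or.inl rfl
      · exact Or.inr rfl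
    · rintro (rfl | rfl)
      · exact ⟨0, rfl⟩
      · exact ⟨1, rfl⟩
  · intro i
    have hmi : i.val < m := lt_of_le_of_ne (hm i.val) i.2
    exact Set.infinite_of_injective_forall_mem
      (f := fun y : ↥(Set.Iio i.val) => ptB (f i.val) (f y.val) (f m))
      (fun a b hab => Subtype.ext (hfinj (ptB_inj2 hab)))
      (fun y => ⟨Or.inr (Or.inr ⟨f i.val, hfd _, f y.val, hfd _, f m, hfd _,
        (hfrel y.val i.val).mpr y.2, (hfrel i.val m).mpr hmi, rfl⟩), lab_ptB _ _ _⟩)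
  · intro n hn
    have hlm := lab_mem hn
    rw [← hfrange] at hlm
    obtain ⟨i, hi⟩ := hlm
    by_cases h : i = m
    · left; rw [← hi, h]
    · right; exact ⟨⟨i, h⟩, hi.symm⟩

end OTE

/-- if `L₁` is a linear order with a least element and no greatest
element, and `L₂` a linear order with a greatest element and no least element,
then `{L₁, L₂} ≤_c {E₁, E₂}`. -/
theorem orders_to_equivalence (L₁ L₂ : Type) [LinearOrder L₁] [LinearOrder L₂]
    [Countable L₁] [Countable L₂]
    (h1least : ∃ a : L₁, ∀ b : L₁, a ≤ b) (h1nogreat : ¬ ∃ a : L₁, ∀ b : L₁, b ≤ a)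
    (h2great : ∃ a : L₂, ∀ b : L₂, b ≤ a) (h2noleast : ¬ ∃ a : L₂, ∀ b : L₂, a ≤ b) :
    PairLE ((· < ·) : L₁ → L₁ → Prop) ((· < ·) : L₂ → L₂ → Prop)
      (relEk 1) (relEk 2) :=
  ⟨OTE.Γop, fun L hc => OTE.case1 h1least h1nogreat L hc,
    fun L hc => OTE.case2 h2great h2noleast L hc⟩
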